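/- For parameters q,t and variables x,y, define P_n(x,y;q,t) = n! \sum_{k=0}^n \binom{n-k+t+kq-1}{n-k}\binom{y}{k} x^k (generalized binomial coefficients as polynomials in t, q, y). Then as formal power series in z, 1+\sum_{n\ge 1} P_n(x,y;q,t) z^n/n! = (1-z)^{-t}\left(1 + \frac{xz}{(1-z)^q}\right)^y. -/

import Mathlib

open PowerSeries

/-- Composition `f ∘ g` of formal power series (intended for `g` with zero
constant coefficient). -/
noncomputable def psComp (f g : PowerSeries ℂ) : PowerSeries ℂ :=
  PowerSeries.mk fun n => ∑ k ∈ Finset.range (n + 1),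
    (PowerSeries.coeff k f) * (PowerSeries.coeff n (g ^ k))

/-- `e^u` for a power series `u` with zero constant coefficient. -/
noncomputable def psExp (u : PowerSeries ℂ) : PowerSeries ℂ :=
  psComp (PowerSeries.exp ℂ) u

/-- The power series `log(1 - z) = -∑_{n≥1} zⁿ/n`. -/
noncomputable def logOneSub : PowerSeries ℂ :=
  PowerSeries.mk fun n => if n = 0 then 0 else -(1 / (n : ℂ))

/-- The power series `log(1 + z) = ∑_{n≥1} (-1)^{n+1} zⁿ/n`. -/
noncomputable def logOneAdd : PowerSeries ℂ :=
  PowerSeries.mk fun n => if n = 0 then 0 else (-1) ^ (n + 1) / (n : ℂ)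

/-- The generalized binomial coefficient `m(m-1)⋯(m-j+1)/j!`. -/
noncomputable def genBinom (m : ℂ) (j : ℕ) : ℂ :=
  (∏ i ∈ Finset.range j, (m - i)) / (j.factorial : ℂ)

namespace Aux
open Finset PowerSeries

lemma coeff_psComp (f g : ℂ⟦X⟧) (n : ℕ) :
    coeff n (psComp f g) = ∑ k ∈ Finset.range (n + 1),
      coeff k f * coeff n (g ^ k) := coeff_mk _ _

lemma coeff_pow_zero {u : ℂ⟦X⟧} (hu : constantCoeff u = 0) {k n : ℕ} (h : n < k) :
    coeff n (u ^ k) = 0 := by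
  have : (X : ℂ⟦X⟧) ^ k ∣ u ^ k := pow_dvd_pow_of_dvd (X_dvd_iff.mpr hu) k
  exact X_pow_dvd_iff.mp this n h

lemma coeff_zero_psComp (f g : ℂ⟦X⟧) : coeff 0 (psComp f g) = coeff 0 f := by
  simp [coeff_psComp]

lemma psComp_add (f₁ f₂ g : ℂ⟦X⟧) :
    psComp (f₁ + f₂) g = psComp f₁ g + psComp f₂ g := by
  ext n
  simp [coeff_psComp, add_mul, Finset.sum_add_distrib]

lemma psComp_C_mul (c : ℂ) (f g : ℂ⟦X⟧) :
    psComp (C c * f) g = C c * psComp f g := by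
  ext n
  simp [coeff_psComp, coeff_C_mul, mul_sum, mul_assoc]

lemma psComp_one (g : ℂ⟦X⟧) : psComp 1 g = 1 := by
  ext n
  rw [coeff_psComp]
  rcases n with _ | m
  · simp
  · rw [Finset.sum_eq_zero, coeff_one]
    · simp
    intro k hk
    rcases k with _ | j
    · simp
    · simp [coeff_one]

-- key sum manipulation: coefficient of (psComp g u) * v
lemma coeff_psComp_mul {u : ℂ⟦X⟧} (hu : constantCoeff u = 0) (g v : ℂ⟦X⟧) (n : ℕ) :
    coeff n (psComp g u * v) =
      ∑ k ∈ Finset.range (n + 1), coeff k g * coeff n (u ^ k * v) := by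
  rw [coeff_mul, Finset.Nat.sum_antidiagonal_eq_sum_range_succ_mk]
  have step : ∀ i ∈ Finset.range (n+1),
      coeff i (psComp g u) * coeff (n-i) v
        = ∑ k ∈ Finset.range (n+1), coeff k g * (coeff i (u ^ k) * coeff (n-i) v) := by
    intro i hi
    rw [coeff_psComp, Finset.sum_mul]
    rw [Finset.sum_subset (Finset.range_subset_range.mpr (by have := Finset.mem_range.mp hi; omega : i + 1 ≤ n + 1))]
    · exact Finset.sum_congr rfl fun k _ => by ring
    · intro k _ hk
      rw [coeff_pow_zero hu (by simpa using hk)]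
      ring
  rw [Finset.sum_congr rfl step, Finset.sum_comm]
  refine Finset.sum_congr rfl fun k _ => ?_
  rw [← Finset.mul_sum, coeff_mul, Finset.Nat.sum_antidiagonal_eq_sum_range_succ_mk]

lemma psComp_X_mul {u : ℂ⟦X⟧} (hu : constantCoeff u = 0) (g : ℂ⟦X⟧) :
    psComp (X * g) u = psComp g u * u := by
  ext n
  rw [coeff_psComp, coeff_psComp_mul hu, Finset.sum_range_succ' _ n]
  have h0 : coeff 0 (X * g : ℂ⟦X⟧) = 0 := by
    simp
  rw [h0, zero_mul, add_zero, Finset.sum_range_succ, ← pow_succ,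
    coeff_pow_zero hu (Nat.lt_succ_self n), mul_zero, add_zero]
  refine Finset.sum_congr rfl fun j _ => ?_
  rw [coeff_succ_X_mul, pow_succ]

open Finset PowerSeries
open scoped PowerSeries

-- chain rule
lemma D_psComp {u : ℂ⟦X⟧} (hu : constantCoeff u = 0) (f : ℂ⟦X⟧) :
    d⁄dX ℂ (psComp f u) = psComp (d⁄dX ℂ f) u * d⁄dX ℂ u := by
  ext n
  rw [coeff_psComp_mul hu, coeff_derivative, coeff_psComp, Finset.sum_mul,
    Finset.sum_range_succ' (fun k => coeff k f * coeff (n+1) (u ^ k) * ((n:ℂ)+1)) (n+1)]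
  simp only [pow_zero, coeff_derivative]
  rw [show coeff (n+1) (1 : ℂ⟦X⟧) = 0 by simp, mul_zero, zero_mul, add_zero]
  refine Finset.sum_congr rfl fun j _ => ?_
  have hD : coeff n (d⁄dX ℂ (u ^ (j+1))) = coeff (n+1) (u ^ (j+1)) * ((n:ℂ)+1) :=
    coeff_derivative _ n
  have hL : d⁄dX ℂ (u ^ (j+1)) = (j+1 : ℕ) • (u ^ j • d⁄dX ℂ u) := by
    simpa using Derivation.leibniz_pow (d⁄dX ℂ) (a := u) (j+1)
  rw [hL] at hD
  have : coeff n ((j+1 : ℕ) • (u ^ j • d⁄dX ℂ u)) = ((j:ℂ)+1) * coeff n (u ^ j * d⁄dX ℂ u) := by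
    rw [smul_eq_mul, map_nsmul, nsmul_eq_mul]
    push_cast
    ring
  rw [this] at hD
  rw [mul_assoc, ← hD]
  ring

-- ODE uniqueness
lemma ode_unique {a b F G : ℂ⟦X⟧} (ha : constantCoeff a = 1)
    (hF : a * d⁄dX ℂ F = b * F) (hG : a * d⁄dX ℂ G = b * G)
    (h0 : coeff 0 F = coeff 0 G) : F = G := by
  ext n
  induction n using Nat.strong_induction_on with
  | _ n ih =>
    match n with
    | 0 => exact h0
    | (m+1) =>
      have key : ∀ (H : ℂ⟦X⟧), a * d⁄dX ℂ H = b * H →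
          ((m:ℂ)+1) * coeff (m+1) H =
            (∑ i ∈ Finset.range (m+1), coeff i b * coeff (m-i) H) -
            ∑ i ∈ Finset.range m,
              coeff (i+1) a * (coeff (m-i) H * ((m:ℂ)-i)) := by
        intro H hH
        have h := congrArg (coeff m) hH
        rw [coeff_mul, coeff_mul, Finset.Nat.sum_antidiagonal_eq_sum_range_succ_mk,
          Finset.Nat.sum_antidiagonal_eq_sum_range_succ_mk,
          Finset.sum_range_succ' (fun i => coeff i a * coeff (m-i) (d⁄dX ℂ H)) m] at h
        simp only [coeff_derivative, Nat.sub_zero] at h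
        rw [← coeff_zero_eq_constantCoeff_apply] at ha
        rw [ha, one_mul] at h
        have hsum : ∑ i ∈ Finset.range m,
            coeff (i+1) a * (coeff (m-(i+1)+1) H * (((m-(i+1) : ℕ) : ℂ)+1)) =
            ∑ i ∈ Finset.range m, coeff (i+1) a * (coeff (m-i) H * ((m:ℂ)-i)) := by
          refine Finset.sum_congr rfl fun i hi => ?_
          have hi' := Finset.mem_range.mp hi
          have e1 : m - (i+1) + 1 = m - i := by omega
          have e2 : ((m - (i+1) : ℕ) : ℂ) + 1 = (m:ℂ) - i := by
            have h1 : i + 1 ≤ m := by omega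
            push_cast [h1]
            ring
          rw [e1, e2]
        rw [hsum] at h
        rw [Nat.succ_eq_add_one] at h
        linear_combination h
      have hFm := key F hF
      have hGm := key G hG
      have hrec : ∀ i, i ≤ m → coeff i F = coeff i G :=
        fun i hi => ih i (by omega)
      have : ((m:ℂ)+1) * coeff (m+1) F = ((m:ℂ)+1) * coeff (m+1) G := by
        rw [hFm, hGm]
        congr 1
        · exact Finset.sum_congr rfl fun i hi => by
            rw [hrec (m-i) (by omega)]
        · exact Finset.sum_congr rfl fun i hi => by
            rw [hrec (m-i) (by omega)]
      refine mul_left_cancel₀ ?_ this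
      have : ((m+1 : ℕ) : ℂ) ≠ 0 := Nat.cast_ne_zero.mpr (Nat.succ_ne_zero m)
      push_cast at this
      exact this
open Finset PowerSeries
open scoped PowerSeries

lemma D_exp : d⁄dX ℂ (exp ℂ) = exp ℂ := by
  ext n
  rw [coeff_derivative, coeff_exp, coeff_exp]
  have h1 : ((n+1 : ℕ) : ℂ) ≠ 0 := Nat.cast_ne_zero.mpr (Nat.succ_ne_zero n)
  have h2 : ((n).factorial : ℂ) ≠ 0 := Nat.cast_ne_zero.mpr (Nat.factorial_ne_zero _)
  simp only [map_div₀, map_one, map_natCast]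
  have e : ((n+1:ℕ) : ℂ) = (n:ℂ)+1 := by push_cast; ring
  rw [Nat.factorial_succ, Nat.cast_mul, ← e, one_div, mul_inv,
    mul_comm (((n+1:ℕ) : ℂ))⁻¹, mul_assoc, inv_mul_cancel₀ h1, mul_one, one_div]

lemma coeff_zero_psExp (u : ℂ⟦X⟧) : coeff 0 (psExp u) = 1 := by
  rw [psExp, coeff_zero_psComp, coeff_zero_eq_constantCoeff_apply, constantCoeff_exp]

lemma D_psExp {u : ℂ⟦X⟧} (hu : constantCoeff u = 0) :
    d⁄dX ℂ (psExp u) = d⁄dX ℂ u * psExp u := by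
  rw [psExp, D_psComp hu, D_exp, mul_comm]

lemma psExp_add {u v : ℂ⟦X⟧} (hu : constantCoeff u = 0) (hv : constantCoeff v = 0) :
    psExp (u + v) = psExp u * psExp v := by
  have huv : constantCoeff (u + v) = 0 := by rw [map_add, hu, hv, add_zero]
  refine ode_unique (a := 1) (b := d⁄dX ℂ (u + v)) (by simp) ?_ ?_ ?_
  · rw [one_mul, D_psExp huv]
  · rw [one_mul]
    have : d⁄dX ℂ (psExp u * psExp v) =
        psExp u * (d⁄dX ℂ v * psExp v) + psExp v * (d⁄dX ℂ u * psExp u) := by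
      rw [← D_psExp hu, ← D_psExp hv]
      simpa [smul_eq_mul] using Derivation.leibniz (d⁄dX ℂ) (psExp u) (psExp v)
    rw [this, map_add]
    ring
  · rw [coeff_zero_psExp]
    have : coeff 0 (psExp u * psExp v) = coeff 0 (psExp u) * coeff 0 (psExp v) := by
      simp [coeff_zero_eq_constantCoeff_apply]
    rw [this, coeff_zero_psExp, coeff_zero_psExp, one_mul]

lemma psExp_zero : psExp 0 = 1 := by
  ext n
  rw [psExp, coeff_psComp]
  rcases n with _ | m
  · simp [constantCoeff_exp]
  · rw [Finset.sum_eq_zero]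
    · simp
    intro k hk
    rcases k with _ | j
    · simp
    · rw [zero_pow (Nat.succ_ne_zero j), map_zero, mul_zero]

lemma psExp_nsmul {u : ℂ⟦X⟧} (hu : constantCoeff u = 0) (k : ℕ) :
    psExp ((k : ℕ) • u) = psExp u ^ k := by
  induction k with
  | zero => simpa using psExp_zero
  | succ m ihm =>
    have : ((m+1 : ℕ) • u) = (m : ℕ) • u + u := by
      rw [add_smul, one_smul]
    rw [this, psExp_add (by simp [hu]) hu, ihm, pow_succ]

open Finset PowerSeries
open scoped PowerSeries

lemma genBinom_zero (s : ℂ) : genBinom s 0 = 1 := by simp [genBinom]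

lemma genBinom_one (s : ℂ) : genBinom s 1 = s := by simp [genBinom]

lemma genBinom_rec (s : ℂ) (n : ℕ) :
    genBinom s (n+1) * ((n:ℂ)+1) = (s - n) * genBinom s n := by
  have h1 : ((n+1).factorial : ℂ) ≠ 0 := Nat.cast_ne_zero.mpr (Nat.factorial_ne_zero _)
  have h2 : ((n).factorial : ℂ) ≠ 0 := Nat.cast_ne_zero.mpr (Nat.factorial_ne_zero _)
  rw [genBinom, genBinom, Finset.prod_range_succ, Nat.factorial_succ, Nat.cast_mul]
  have hn1 : ((n:ℂ)+1) ≠ 0 := by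
    have h := Nat.cast_ne_zero (R := ℂ).mpr (n.succ_ne_zero)
    push_cast at h
    exact h
  field_simp
  push_cast
  ring

lemma D_logOneSub : d⁄dX ℂ logOneSub = PowerSeries.mk fun _ => (-1 : ℂ) := by
  ext n
  rw [coeff_derivative, logOneSub, coeff_mk, coeff_mk, if_neg (Nat.succ_ne_zero n)]
  have h : ((n+1:ℕ) : ℂ) ≠ 0 := Nat.cast_ne_zero.mpr (Nat.succ_ne_zero n)
  push_cast at h ⊢
  field_simp

lemma D_logOneAdd : d⁄dX ℂ logOneAdd = PowerSeries.mk fun n => ((-1 : ℂ))^n := by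
  ext n
  rw [coeff_derivative, logOneAdd, coeff_mk, coeff_mk, if_neg (Nat.succ_ne_zero n)]
  have h : ((n+1:ℕ) : ℂ) ≠ 0 := Nat.cast_ne_zero.mpr (Nat.succ_ne_zero n)
  push_cast at h ⊢
  rw [pow_succ, pow_succ]
  field_simp

lemma one_sub_X_mul_D_logOneSub : (1 - X) * d⁄dX ℂ logOneSub = -1 := by
  rw [D_logOneSub]
  ext n
  rw [sub_mul, one_mul, map_sub]
  rcases n with _ | m
  · simp
  · simp [coeff_succ_X_mul, coeff_one]

lemma one_add_X_mul_D_logOneAdd : (1 + X) * d⁄dX ℂ logOneAdd = 1 := by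
  rw [D_logOneAdd]
  ext n
  rw [add_mul, one_mul, map_add]
  rcases n with _ | m
  · simp
  · simp [coeff_succ_X_mul, coeff_one, pow_succ]

noncomputable def binNeg (s : ℂ) : ℂ⟦X⟧ := PowerSeries.mk fun n => (-1 : ℂ)^n * genBinom s n

noncomputable def binSeries (y : ℂ) : ℂ⟦X⟧ := PowerSeries.mk fun n => genBinom y n

lemma ode_binNeg (s : ℂ) : (1 - X) * d⁄dX ℂ (binNeg s) = C (-s) * binNeg s := by
  ext n
  rw [sub_mul, one_mul, map_sub, coeff_C_mul, coeff_derivative, binNeg, coeff_mk, coeff_mk]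
  rcases n with _ | m
  · rw [show coeff 0 (X * d⁄dX ℂ (PowerSeries.mk fun n => (-1 : ℂ)^n * genBinom s n)) = 0 by
      simp]
    simp [genBinom_one, genBinom_zero]
  · rw [coeff_succ_X_mul, coeff_derivative, coeff_mk]
    have h1 := genBinom_rec s (m+1)
    push_cast at h1 ⊢
    linear_combination ((-1:ℂ))^(m+2) * h1

lemma ode_binSeries (y : ℂ) : (1 + X) * d⁄dX ℂ (binSeries y) = C y * binSeries y := by
  ext n
  rw [add_mul, one_mul, map_add, coeff_C_mul, coeff_derivative, binSeries, coeff_mk, coeff_mk]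
  rcases n with _ | m
  · rw [show coeff 0 (X * d⁄dX ℂ (PowerSeries.mk fun n => genBinom y n)) = 0 by simp]
    simp [genBinom_one, genBinom_zero]
  · rw [coeff_succ_X_mul, coeff_derivative, coeff_mk]
    have h1 := genBinom_rec y (m+1)
    push_cast at h1 ⊢
    linear_combination h1

lemma constantCoeff_logOneSub : constantCoeff logOneSub = 0 := by
  rw [← coeff_zero_eq_constantCoeff_apply, logOneSub, coeff_mk]; simp

lemma constantCoeff_logOneAdd : constantCoeff logOneAdd = 0 := by
  rw [← coeff_zero_eq_constantCoeff_apply, logOneAdd, coeff_mk]; simp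

lemma psExp_smul_logOneSub (s : ℂ) : psExp (s • logOneSub) = binNeg s := by
  have h0 : constantCoeff (s • logOneSub) = 0 := by
    rw [smul_eq_C_mul, map_mul, constantCoeff_C, constantCoeff_logOneSub, mul_zero]
  refine ode_unique (a := 1 - X) (b := C (-s)) (by simp) ?_ (ode_binNeg s) ?_
  · rw [D_psExp h0]
    have hd : d⁄dX ℂ (s • logOneSub) = s • d⁄dX ℂ logOneSub := derivativeFun_smul s logOneSub
    rw [hd]
    rw [smul_eq_C_mul]
    have : (1 - X) * (C s * d⁄dX ℂ logOneSub * psExp (s • logOneSub)) =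
        C s * ((1 - X) * d⁄dX ℂ logOneSub) * psExp (s • logOneSub) := by ring
    rw [this, one_sub_X_mul_D_logOneSub]
    rw [show (C s) * (-1 : ℂ⟦X⟧) = C (-s) by simp [map_neg]]
  · rw [coeff_zero_psExp, binNeg, coeff_mk, pow_zero, genBinom_zero, one_mul]

lemma psComp_one_add_X_mul {u : ℂ⟦X⟧} (hu : constantCoeff u = 0) (g : ℂ⟦X⟧) :
    psComp ((1 + X) * g) u = (1 + u) * psComp g u := by
  rw [add_mul, one_mul, psComp_add, psComp_X_mul hu, add_mul, one_mul]
  ring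

lemma psExp_smul_log_comp (y : ℂ) {u : ℂ⟦X⟧} (hu : constantCoeff u = 0) :
    psExp (y • psComp logOneAdd u) = psComp (binSeries y) u := by
  set Λ := psComp logOneAdd u with hΛ
  have hΛ0 : constantCoeff Λ = 0 := by
    rw [hΛ, ← coeff_zero_eq_constantCoeff_apply, coeff_zero_psComp,
      coeff_zero_eq_constantCoeff_apply, constantCoeff_logOneAdd]
  have hyΛ0 : constantCoeff (y • Λ) = 0 := by
    rw [smul_eq_C_mul, map_mul, constantCoeff_C, hΛ0, mul_zero]
  have hinv : (1 + u) * psComp (d⁄dX ℂ logOneAdd) u = 1 := by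
    rw [← psComp_one_add_X_mul hu, one_add_X_mul_D_logOneAdd, psComp_one]
  have hdΛ : (1 + u) * d⁄dX ℂ Λ = d⁄dX ℂ u := by
    rw [hΛ, D_psComp hu, ← mul_assoc, hinv, one_mul]
  refine ode_unique (a := 1 + u) (b := C y * d⁄dX ℂ u)
      (by rw [map_add, hu, map_one, add_zero]) ?_ ?_ ?_
  · rw [D_psExp hyΛ0]
    have hd : d⁄dX ℂ (y • Λ) = y • d⁄dX ℂ Λ := derivativeFun_smul y Λ
    rw [hd, smul_eq_C_mul]
    have : (1 + u) * (C y * d⁄dX ℂ Λ * psExp (y • Λ)) =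
        C y * ((1 + u) * d⁄dX ℂ Λ) * psExp (y • Λ) := by ring
    rw [this, hdΛ]
  · rw [D_psComp hu]
    have : (1 + u) * (psComp (d⁄dX ℂ (binSeries y)) u * d⁄dX ℂ u) =
        ((1 + u) * psComp (d⁄dX ℂ (binSeries y)) u) * d⁄dX ℂ u := by ring
    rw [this, ← psComp_one_add_X_mul hu, ode_binSeries, psComp_C_mul]
    ring
  · rw [coeff_zero_psExp, coeff_zero_psComp, binSeries, coeff_mk, genBinom_zero]

open Finset PowerSeries
open scoped PowerSeries

lemma neg_genBinom (c : ℂ) (m : ℕ) :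
    (-1:ℂ)^m * genBinom (-c) m = genBinom ((m:ℂ) + c - 1) m := by
  rw [genBinom, genBinom]
  have h1 : ∏ i ∈ Finset.range m, (-c - (i:ℂ)) =
      (-1:ℂ)^m * ∏ i ∈ Finset.range m, (c + (i:ℂ)) := by
    calc ∏ i ∈ Finset.range m, (-c - (i:ℂ))
        = ∏ i ∈ Finset.range m, ((-1) * (c + (i:ℂ))) :=
          Finset.prod_congr rfl fun i _ => by ring
      _ = (-1:ℂ)^m * ∏ i ∈ Finset.range m, (c + (i:ℂ)) := by
          rw [Finset.prod_mul_distrib, Finset.prod_const, Finset.card_range]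
  have h2 : ∏ i ∈ Finset.range m, ((m:ℂ) + c - 1 - (i:ℂ)) =
      ∏ i ∈ Finset.range m, (c + (i:ℂ)) := by
    rw [← Finset.prod_range_reflect (fun j => c + (j:ℂ)) m]
    refine Finset.prod_congr rfl fun i hi => ?_
    have hi' := Finset.mem_range.mp hi
    have e : m - 1 - i = m - (i+1) := by omega
    rw [e, Nat.cast_sub (by omega)]
    push_cast
    ring
  rw [h1, h2, ← mul_div_assoc, ← mul_assoc, ← pow_add, ← two_mul, pow_mul, neg_one_sq,
    one_pow, one_mul]

lemma coeff_term (x t q : ℂ) (n k : ℕ) (hk : k ≤ n) :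
    coeff n ((C x * X * psExp ((-q) • logOneSub))^k * psExp ((-t) • logOneSub))
      = x^k * genBinom (((n - k : ℕ) : ℂ) + t + (k:ℂ) * q - 1) (n - k) := by
  have hqL : constantCoeff ((-q) • logOneSub) = 0 := by
    rw [smul_eq_C_mul, map_mul, constantCoeff_C, constantCoeff_logOneSub, mul_zero]
  have htL : constantCoeff ((-t) • logOneSub) = 0 := by
    rw [smul_eq_C_mul, map_mul, constantCoeff_C, constantCoeff_logOneSub, mul_zero]
  have hkqL : constantCoeff ((k : ℕ) • ((-q) • logOneSub)) = 0 := by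
    rw [map_nsmul, hqL, smul_zero]
  rw [mul_pow, mul_pow, ← map_pow, ← psExp_nsmul hqL k,
    show C (x^k) * X^k * psExp ((k : ℕ) • ((-q) • logOneSub)) * psExp ((-t) • logOneSub)
      = C (x^k) * (X^k * (psExp ((k : ℕ) • ((-q) • logOneSub)) * psExp ((-t) • logOneSub)))
      by ring,
    ← psExp_add hkqL htL, ← Nat.cast_smul_eq_nsmul ℂ k, smul_smul, ← add_smul,
    show ((k:ℂ) * (-q) + (-t)) = -(t + (k:ℂ)*q) by ring,
    psExp_smul_logOneSub, coeff_C_mul, coeff_X_pow_mul', if_pos hk, binNeg, coeff_mk,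
    neg_genBinom (t + (k:ℂ)*q) (n-k),
    show ((n-k : ℕ):ℂ) + (t + (k:ℂ)*q) - 1 = ((n-k : ℕ):ℂ) + t + (k:ℂ)*q - 1 by ring]

end Aux

/-- `1 + ∑_{n≥1} Pₙ(x,y;q,t) zⁿ/n! = (1-z)^{-t} (1 + xz/(1-z)^q)^y`, where
`Pₙ(x,y;q,t) = n! ∑ₖ C(n-k+t+kq-1, n-k) C(y,k) x^k`. -/
theorem moments_egf (x y q t : ℂ) :
    (PowerSeries.mk fun n =>
        if n = 0 then 1 else
          (∑ k ∈ Finset.range (n + 1),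
            genBinom (((n - k : ℕ) : ℂ) + t + k * q - 1) (n - k) * genBinom y k * x ^ k)) =
      psExp ((-t) • logOneSub) *
        psExp (y • psComp logOneAdd
          (PowerSeries.C x * PowerSeries.X * psExp ((-q) • logOneSub))) := by
  have hu : constantCoeff (C x * X * psExp ((-q) • logOneSub)) = 0 := by
    rw [map_mul, map_mul, constantCoeff_C, constantCoeff_X, mul_zero, zero_mul]
  rw [Aux.psExp_smul_log_comp y hu,
    mul_comm (psExp ((-t) • logOneSub))]
  ext n
  rw [Aux.coeff_psComp_mul hu, coeff_mk]
  have hstep : ∀ k ∈ Finset.range (n+1),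
      coeff k (Aux.binSeries y) *
        coeff n ((C x * X * psExp ((-q) • logOneSub))^k * psExp ((-t) • logOneSub))
      = genBinom y k * (x^k * genBinom (((n-k:ℕ):ℂ) + t + (k:ℂ)*q - 1) (n-k)) := by
    intro k hk
    rw [Aux.binSeries, coeff_mk,
      Aux.coeff_term x t q n k (Nat.lt_succ_iff.mp (Finset.mem_range.mp hk))]
  rw [Finset.sum_congr rfl hstep]
  rcases n with _ | m
  · rw [if_pos rfl]
    simp [Aux.genBinom_zero]
  · rw [if_neg (Nat.succ_ne_zero m)]
    exact Finset.sum_congr rfl fun k _ => by push_cast; ring
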